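/- For every real p ≥ 2, the function f(x) = x^p on [0,∞) is superquadratic: for every x ≥ 0 there exists a constant C(x) ∈ ℝ (one may take C(x) = p·x^{p−1}) such that for all y ≥ 0, y^p ≥ x^p + C(x)·(y − x) + |y − x|^p. -/

import Mathlib

lemma rpow_mul_self {a q : ℝ} (ha : 0 ≤ a) (hq : 1 ≤ q) :
    a ^ q = a * a ^ (q - 1) := by
  have : a ^ q = a ^ ((1:ℝ) + (q - 1)) := by norm_num
  rw [this, Real.rpow_add' ha (by norm_num; linarith), Real.rpow_one]

lemma rpow_superadd {q a b : ℝ} (hq : 1 ≤ q) (ha : 0 ≤ a) (hb : 0 ≤ b) :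
    a ^ q + b ^ q ≤ (a + b) ^ q := by
  have hab : 0 ≤ a + b := by linarith
  have h1 : a ^ q ≤ a * (a + b) ^ (q - 1) := by
    rw [rpow_mul_self ha hq]
    exact mul_le_mul_of_nonneg_left (Real.rpow_le_rpow ha (by linarith) (by linarith)) ha
  have h2 : b ^ q ≤ b * (a + b) ^ (q - 1) := by
    rw [rpow_mul_self hb hq]
    exact mul_le_mul_of_nonneg_left (Real.rpow_le_rpow hb (by linarith) (by linarith)) hb
  rw [rpow_mul_self hab hq]
  nlinarith [h1, h2]

lemma sq_case_ge (p x : ℝ) (hp : 2 ≤ p) (hx : 0 ≤ x) {t : ℝ} (ht : 0 ≤ t) :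
    x ^ p + p * x ^ (p - 1) * t + t ^ p ≤ (x + t) ^ p := by
  have hp1 : (1:ℝ) ≤ p := by linarith
  set f : ℝ → ℝ := fun s => (x + s) ^ p - (x ^ p + p * x ^ (p - 1) * s + s ^ p) with hf
  have hder : ∀ s : ℝ,
      HasDerivAt f (p * (x + s) ^ (p - 1) - (p * x ^ (p - 1) + p * s ^ (p - 1))) s := by
    intro s
    have h1 : HasDerivAt (fun s : ℝ => (x + s) ^ p) (p * (x + s) ^ (p - 1)) s := by
      have h := (Real.hasDerivAt_rpow_const (x := x + s) (p := p) (Or.inr hp1)).comp s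
        ((hasDerivAt_id s).const_add x)
      simpa [Function.comp_def] using h
    have h2 : HasDerivAt (fun s : ℝ => x ^ p + p * x ^ (p - 1) * s + s ^ p)
        (p * x ^ (p - 1) + p * s ^ (p - 1)) s := by
      have ha : HasDerivAt (fun s : ℝ => x ^ p + p * x ^ (p - 1) * s)
          (p * x ^ (p - 1)) s := by
        simpa using ((hasDerivAt_id s).const_mul (p * x ^ (p - 1))).const_add (x ^ p)
      exact ha.add (Real.hasDerivAt_rpow_const (Or.inr hp1))
    exact h1.sub h2
  have hmono : MonotoneOn f (Set.Ici (0:ℝ)) := by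
    apply monotoneOn_of_deriv_nonneg (convex_Ici 0)
    · exact fun s _ => (hder s).continuousAt.continuousWithinAt
    · exact fun s _ => (hder s).differentiableAt.differentiableWithinAt
    · intro s hs
      rw [interior_Ici] at hs
      rw [(hder s).deriv]
      have hs0 : (0:ℝ) ≤ s := le_of_lt hs
      have := rpow_superadd (q := p - 1) (by linarith) hx hs0
      nlinarith [this]
  have h0 : f 0 = 0 := by
    simp [hf, Real.zero_rpow (by positivity : p ≠ 0)]
  have := hmono (Set.self_mem_Ici) (Set.mem_Ici.2 ht) ht
  rw [h0] at this
  simp only [hf] at this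
  linarith

lemma sq_case_le (p x : ℝ) (hp : 2 ≤ p) (hx : 0 ≤ x) {t : ℝ} (ht : 0 ≤ t) (htx : t ≤ x) :
    x ^ p - p * x ^ (p - 1) * t + t ^ p ≤ (x - t) ^ p := by
  have hp1 : (1:ℝ) ≤ p := by linarith
  set g : ℝ → ℝ := fun s => (x - s) ^ p + p * x ^ (p - 1) * s - s ^ p with hg
  have hder : ∀ s : ℝ,
      HasDerivAt g (p * x ^ (p - 1) - p * (x - s) ^ (p - 1) - p * s ^ (p - 1)) s := by
    intro s
    have h1 : HasDerivAt (fun s : ℝ => (x - s) ^ p) (-(p * (x - s) ^ (p - 1))) s := by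
      have h := (Real.hasDerivAt_rpow_const (x := x - s) (p := p) (Or.inr hp1)).comp s
        ((hasDerivAt_id s).const_sub x)
      simpa [Function.comp_def] using h
    have h2 : HasDerivAt (fun s : ℝ => p * x ^ (p - 1) * s) (p * x ^ (p - 1)) s := by
      simpa using (hasDerivAt_id s).const_mul (p * x ^ (p - 1))
    have h3 := (h1.add h2).sub (Real.hasDerivAt_rpow_const (x := s) (p := p) (Or.inr hp1))
    refine h3.congr_deriv ?_
    ring
  have hmono : MonotoneOn g (Set.Icc (0:ℝ) x) := by
    apply monotoneOn_of_deriv_nonneg (convex_Icc 0 x)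
    · exact fun s _ => (hder s).continuousAt.continuousWithinAt
    · exact fun s _ => (hder s).differentiableAt.differentiableWithinAt
    · intro s hs
      rw [interior_Icc] at hs
      rw [(hder s).deriv]
      have hs0 : (0:ℝ) ≤ s := le_of_lt hs.1
      have hxs : (0:ℝ) ≤ x - s := by linarith [hs.2]
      have := rpow_superadd (q := p - 1) (by linarith) hxs hs0
      have hxx : x - s + s = x := by ring
      rw [hxx] at this
      nlinarith [this]
  have h0 : g 0 = x ^ p := by
    simp [hg, Real.zero_rpow (by positivity : p ≠ 0)]
  have := hmono (Set.mem_Icc.2 ⟨le_refl 0, hx⟩) (Set.mem_Icc.2 ⟨ht, htx⟩) ht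
  rw [h0] at this
  simp only [hg] at this
  linarith

/-- For p ≥ 2 the power function x ↦ x^p is superquadratic on [0,∞), with
C(x) = p·x^{p-1} as an admissible constant. -/
theorem rpow_superquadratic (p : ℝ) (hp : 2 ≤ p) (x : ℝ) (hx : 0 ≤ x) :
    ∃ C : ℝ, C = p * x ^ (p - 1) ∧
      ∀ y : ℝ, 0 ≤ y → y ^ p ≥ x ^ p + C * (y - x) + |y - x| ^ p := by
  refine ⟨p * x ^ (p - 1), rfl, fun y hy => ?_⟩
  rcases le_or_gt x y with h | h
  · have ht : 0 ≤ y - x := by linarith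
    have := sq_case_ge p x hp hx ht
    rw [abs_of_nonneg ht]
    have hxy : x + (y - x) = y := by ring
    rw [hxy] at this
    linarith
  · have ht : 0 ≤ x - y := by linarith
    have := sq_case_le p x hp hx ht (by linarith)
    rw [abs_of_neg (by linarith : y - x < 0)]
    have hxy : x - (x - y) = y := by ring
    rw [hxy] at this
    have : x ^ p - p * x ^ (p - 1) * (x - y) + (x - y) ^ p ≤ y ^ p := this
    have hneg : -(y - x) = x - y := by ring
    rw [hneg]
    linarith
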